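/- For symmetric contractual contracts c_A = A says ((B says b) ↠ a) and c_B = B says ((A says a) ↠ b), it holds that c_A ∧ c_B ⊢ (A says a) ∧ (B says b). -/

import Mathlib

/-- Formulae of the contract logic PCL: intuitionistic propositional logic
extended with contractual implication ↠ and an indexed lax modality `says`. -/
inductive PCL (P At : Type) where
  | atom : At → PCL P At
  | top : PCL P At
  | bot : PCL P At
  | and : PCL P At → PCL P At → PCL P At
  | or : PCL P At → PCL P At → PCL P At
  | imp : PCL P At → PCL P At → PCL P At
  | cimp : PCL P At → PCL P At → PCL P At
  | says : P → PCL P At → PCL P At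

/-- Hilbert-style provability for PCL: intuitionistic propositional axioms,
modus ponens, the contractual-implication axioms
⊤↠⊤, (φ↠φ)→φ, (φ'→φ)→(φ↠ψ)→(ψ→ψ')→(φ'↠ψ'),
and the lax `says` axioms. -/
inductive Prov {P At : Type} (Γ : Set (PCL P At)) : PCL P At → Prop where
  | ax {φ} : φ ∈ Γ → Prov Γ φ
  | mp {φ ψ} : Prov Γ (.imp φ ψ) → Prov Γ φ → Prov Γ ψ
  | k (φ ψ) : Prov Γ (.imp φ (.imp ψ φ))
  | s (φ ψ χ) : Prov Γ (.imp (.imp φ (.imp ψ χ)) (.imp (.imp φ ψ) (.imp φ χ)))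
  | andI (φ ψ) : Prov Γ (.imp φ (.imp ψ (.and φ ψ)))
  | andE1 (φ ψ) : Prov Γ (.imp (.and φ ψ) φ)
  | andE2 (φ ψ) : Prov Γ (.imp (.and φ ψ) ψ)
  | orI1 (φ ψ) : Prov Γ (.imp φ (.or φ ψ))
  | orI2 (φ ψ) : Prov Γ (.imp ψ (.or φ ψ))
  | orE (φ ψ χ) : Prov Γ (.imp (.imp φ χ) (.imp (.imp ψ χ) (.imp (.or φ ψ) χ)))
  | topI : Prov Γ .top
  | botE (φ) : Prov Γ (.imp .bot φ)
  | ctop : Prov Γ (.cimp .top .top)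
  | cfix (φ) : Prov Γ (.imp (.cimp φ φ) φ)
  | cmono (φ φ' ψ ψ') :
      Prov Γ (.imp (.imp φ' φ) (.imp (.cimp φ ψ) (.imp (.imp ψ ψ') (.cimp φ' ψ'))))
  | saysI (A φ) : Prov Γ (.imp φ (.says A φ))
  | saysIdem (A φ) : Prov Γ (.imp (.says A (.says A φ)) (.says A φ))
  | saysMono (A φ ψ) : Prov Γ (.imp (.imp φ ψ) (.imp (.says A φ) (.says A ψ)))


namespace PCLAux

variable {P At : Type}

theorem provWeak {Γ Δ : Set (PCL P At)} (h : Γ ⊆ Δ) : ∀ {φ}, Prov Γ φ → Prov Δ φ := by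
  intro φ hp
  induction hp with
  | ax h' => exact .ax (h h')
  | mp _ _ ih1 ih2 => exact .mp ih1 ih2
  | k φ ψ => exact .k φ ψ
  | s φ ψ χ => exact .s φ ψ χ
  | andI φ ψ => exact .andI φ ψ
  | andE1 φ ψ => exact .andE1 φ ψ
  | andE2 φ ψ => exact .andE2 φ ψ
  | orI1 φ ψ => exact .orI1 φ ψ
  | orI2 φ ψ => exact .orI2 φ ψ
  | orE φ ψ χ => exact .orE φ ψ χ
  | topI => exact .topI
  | botE φ => exact .botE φ
  | ctop => exact .ctop
  | cfix φ => exact .cfix φ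
  | cmono φ φ' ψ ψ' => exact .cmono φ φ' ψ ψ'
  | saysI A φ => exact .saysI A φ
  | saysIdem A φ => exact .saysIdem A φ
  | saysMono A φ ψ => exact .saysMono A φ ψ

theorem provId {Γ : Set (PCL P At)} (φ : PCL P At) : Prov Γ (.imp φ φ) :=
  .mp (.mp (.s φ (.imp φ φ) φ) (.k φ (.imp φ φ))) (.k φ φ)

theorem wk1 {Γ : Set (PCL P At)} {ψ : PCL P At} (φ : PCL P At) (h : Prov Γ ψ) :
    Prov Γ (.imp φ ψ) := .mp (.k ψ φ) h

theorem ded {Γ : Set (PCL P At)} {φ ψ : PCL P At} (h : Prov (insert φ Γ) ψ) :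
    Prov Γ (.imp φ ψ) := by
  induction h with
  | @ax χ h' =>
      rcases Set.mem_insert_iff.mp h' with h' | h'
      · exact h' ▸ provId χ
      · exact wk1 φ (.ax h')
  | @mp χ ρ _ _ ih1 ih2 => exact .mp (.mp (.s φ χ ρ) ih1) ih2
  | k φ' ψ' => exact wk1 _ (.k φ' ψ')
  | s φ' ψ' χ => exact wk1 _ (.s φ' ψ' χ)
  | andI φ' ψ' => exact wk1 _ (.andI φ' ψ')
  | andE1 φ' ψ' => exact wk1 _ (.andE1 φ' ψ')
  | andE2 φ' ψ' => exact wk1 _ (.andE2 φ' ψ')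
  | orI1 φ' ψ' => exact wk1 _ (.orI1 φ' ψ')
  | orI2 φ' ψ' => exact wk1 _ (.orI2 φ' ψ')
  | orE φ' ψ' χ => exact wk1 _ (.orE φ' ψ' χ)
  | topI => exact wk1 _ .topI
  | botE φ' => exact wk1 _ (.botE φ')
  | ctop => exact wk1 _ .ctop
  | cfix φ' => exact wk1 _ (.cfix φ')
  | cmono φ' φ'' ψ' ψ'' => exact wk1 _ (.cmono φ' φ'' ψ' ψ'')
  | saysI A φ' => exact wk1 _ (.saysI A φ')
  | saysIdem A φ' => exact wk1 _ (.saysIdem A φ')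
  | saysMono A φ' ψ' => exact wk1 _ (.saysMono A φ' ψ')

theorem impTrans {Γ : Set (PCL P At)} {φ ψ χ : PCL P At}
    (h1 : Prov Γ (.imp φ ψ)) (h2 : Prov Γ (.imp ψ χ)) : Prov Γ (.imp φ χ) := by
  apply ded
  exact .mp (provWeak (Set.subset_insert _ _) h2)
    (.mp (provWeak (Set.subset_insert _ _) h1) (.ax (Set.mem_insert _ _)))

theorem monoApp {Γ : Set (PCL P At)} {φ ψ : PCL P At} (A : P)
    (h : Prov Γ (.imp φ ψ)) (hx : Prov Γ (.says A φ)) : Prov Γ (.says A ψ) :=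
  .mp (.mp (.saysMono A φ ψ) h) hx

theorem saysApp {Γ : Set (PCL P At)} {φ ψ : PCL P At} (A : P)
    (hf : Prov Γ (.says A (.imp φ ψ))) (hx : Prov Γ (.says A φ)) :
    Prov Γ (.says A ψ) := by
  refine .mp (.saysIdem A ψ) (monoApp A ?_ hf)
  apply ded
  exact .mp (.mp (.saysMono A φ ψ) (.ax (Set.mem_insert _ _)))
    (provWeak (Set.subset_insert _ _) hx)

/-- From `p ↠ q` and `q → p`, derive `q`. -/
theorem cfixUse {Γ : Set (PCL P At)} {p q : PCL P At}
    (hc : Prov Γ (.cimp p q)) (h : Prov Γ (.imp q p)) : Prov Γ q :=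
  .mp (.cfix q) (.mp (.mp (.mp (.cmono p q q q) h) hc) (provId q))

/-- `(p ↠ q) → (p → q)` is a theorem. -/
theorem cimpToImp {Γ : Set (PCL P At)} (p q : PCL P At) :
    Prov Γ (.imp (.cimp p q) (.imp p q)) := by
  apply ded; apply ded
  have hp : Prov (insert p (insert (PCL.cimp p q) Γ)) p := .ax (Set.mem_insert _ _)
  have hc : Prov (insert p (insert (PCL.cimp p q) Γ)) (.cimp p q) :=
    .ax (Set.mem_insert_iff.mpr (Or.inr (Set.mem_insert _ _)))
  -- ⊤ ↠ q
  have h1 : Prov (insert p (insert (PCL.cimp p q) Γ)) (.cimp .top q) :=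
    .mp (.mp (.mp (.cmono p .top q q) (wk1 .top hp)) hc) (provId q)
  exact cfixUse h1 (wk1 q .topI)

end PCLAux

open PCLAux in
/-- for symmetric contractual contracts
c_A = A says ((B says b) ↠ a) and c_B = B says ((A says a) ↠ b),
c_A ∧ c_B ⊢ (A says a) ∧ (B says b). -/
theorem stmt11 {P At : Type} (A B : P) (a b : At) :
    Prov ({PCL.and (.says A (.cimp (.says B (.atom b)) (.atom a)))
                   (.says B (.cimp (.says A (.atom a)) (.atom b)))} : Set (PCL P At))
      (.and (.says A (.atom a)) (.says B (.atom b))) := by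
  set α : PCL P At := .says A (.atom a) with hα
  set β : PCL P At := .says B (.atom b) with hβ
  set cA : PCL P At := .says A (.cimp β (.atom a)) with hcA
  set cB : PCL P At := .says B (.cimp α (.atom b)) with hcB
  set Γ : Set (PCL P At) := {PCL.and cA cB} with hΓ
  have hhyp : Prov Γ (PCL.and cA cB) := .ax rfl
  have hA : Prov Γ cA := .mp (.andE1 _ _) hhyp
  have hB : Prov Γ cB := .mp (.andE2 _ _) hhyp
  -- β → α
  have h1 : Prov Γ (.imp β α) := by
    apply ded
    have hA' : Prov (insert β Γ) cA := provWeak (Set.subset_insert _ _) hA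
    have hAβ : Prov (insert β Γ) (.says A β) :=
      .mp (.saysI A β) (.ax (Set.mem_insert _ _))
    have himp : Prov (insert β Γ) (.says A (.imp β (.atom a))) :=
      monoApp A (cimpToImp β (.atom a)) hA'
    exact saysApp A himp hAβ
  -- α → β
  have h2 : Prov Γ (.imp α β) := by
    apply ded
    have hB' : Prov (insert α Γ) cB := provWeak (Set.subset_insert _ _) hB
    have hBα : Prov (insert α Γ) (.says B α) :=
      .mp (.saysI B α) (.ax (Set.mem_insert _ _))
    have himp : Prov (insert α Γ) (.says B (.imp α (.atom b))) :=
      monoApp B (cimpToImp α (.atom b)) hB'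
    exact saysApp B himp hBα
  -- a → β
  have h3 : Prov Γ (.imp (.atom a) β) := impTrans (.saysI A (.atom a)) h2
  -- (β ↠ a) → a
  have h4 : Prov Γ (.imp (.cimp β (.atom a)) (.atom a)) := by
    apply ded
    exact cfixUse (.ax (Set.mem_insert _ _)) (provWeak (Set.subset_insert _ _) h3)
  have hα' : Prov Γ α := monoApp A h4 hA
  have hβ' : Prov Γ β := .mp h2 hα'
  exact .mp (.mp (.andI α β) hα') hβ'
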